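/- If Φ satisfies Φ(x) ≥ −K(1 + x_1 + … + x_T) and (u, Δ) is a superhedge of Φ with |Δ_t| ≤ N for all t, then ⊕u(x) ≥ −(K + 2N)(1 + x_1 + … + x_T) for all x ∈ Ω; hence there exist constants a_1,…,a_T summing to 0 such that each ū_t := a_t + u_t + (K + 2N)(1/T + x_t) is nonnegative and (ū, −Δ)-type rearrangement gives a superhedge of Φ + Γ with Γ(x) = (K+2N)(1 + Σ x_t) by nonnegative static parts. -/

import Mathlib

open MeasureTheory Filter Topology

noncomputable def gain (T : ℕ) (Δ : ℕ → (Fin T → ℝ) → ℝ) (x : Fin T → ℝ) : ℝ :=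
  ∑ i ∈ Finset.range (T - 1),
    if h : i + 1 < T then Δ i x * (x ⟨i + 1, h⟩ - x ⟨i, Nat.lt_of_succ_lt h⟩) else 0

def IsStrategy (T : ℕ) (N : ℝ) (Δ : ℕ → (Fin T → ℝ) → ℝ) : Prop :=
  ∀ i, Measurable (Δ i) ∧ (∀ x, |Δ i x| ≤ N) ∧
    ∀ x y : Fin T → ℝ, (∀ j : Fin T, (j : ℕ) ≤ i → x j = y j) → Δ i x = Δ i y

lemma gain_neg (T : ℕ) (Δ : ℕ → (Fin T → ℝ) → ℝ) (x : Fin T → ℝ) :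
    gain T (fun i z => -(Δ i z)) x = -gain T Δ x := by
  unfold gain
  rw [← Finset.sum_neg_distrib]
  refine Finset.sum_congr rfl fun i _ => ?_
  by_cases h : i + 1 < T <;> simp [h]

lemma gain_le (T : ℕ) (hT : 2 ≤ T) (N : ℝ) (hN : 0 ≤ N) (Δ : ℕ → (Fin T → ℝ) → ℝ)
    (hΔ : ∀ i y, |Δ i y| ≤ N) (x : Fin T → ℝ) (hx : ∀ t, 0 ≤ x t) :
    gain T Δ x ≤ 2 * N * ∑ t, x t := by
  set X : ℕ → ℝ := fun i => if h : i < T then x ⟨i, h⟩ else 0 with hX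
  have hXnn : ∀ i, 0 ≤ X i := by
    intro i; simp only [hX]; split
    · exact hx _
    · exact le_rfl
  have hsum : ∑ t, x t = ∑ i ∈ Finset.range T, X i := by
    rw [Finset.sum_range fun i => X i]
    refine Finset.sum_congr rfl fun i _ => ?_
    simp [hX, i.2]
  have step : gain T Δ x ≤ ∑ i ∈ Finset.range (T-1), (N * (X i + X (i+1))) := by
    unfold gain
    refine Finset.sum_le_sum fun i hi => ?_
    have hi' : i + 1 < T := by
      have := Finset.mem_range.mp hi; omega
    rw [dif_pos hi']
    have h1 : X i = x ⟨i, Nat.lt_of_succ_lt hi'⟩ := by simp [hX, Nat.lt_of_succ_lt hi']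
    have h2 : X (i+1) = x ⟨i+1, hi'⟩ := by simp [hX, hi']
    calc Δ i x * (x ⟨i + 1, hi'⟩ - x ⟨i, Nat.lt_of_succ_lt hi'⟩)
        ≤ |Δ i x * (x ⟨i + 1, hi'⟩ - x ⟨i, Nat.lt_of_succ_lt hi'⟩)| := le_abs_self _
      _ = |Δ i x| * |x ⟨i + 1, hi'⟩ - x ⟨i, Nat.lt_of_succ_lt hi'⟩| := abs_mul _ _
      _ ≤ N * (X i + X (i+1)) := by
          rw [h1, h2]
          refine mul_le_mul (hΔ i x) ?_ (abs_nonneg _) hN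
          rw [abs_sub_comm]
          calc |x ⟨i, _⟩ - x ⟨i+1, hi'⟩| ≤ |x ⟨i, Nat.lt_of_succ_lt hi'⟩| + |x ⟨i+1, hi'⟩| :=
                abs_sub _ _
            _ = x ⟨i, Nat.lt_of_succ_lt hi'⟩ + x ⟨i+1, hi'⟩ := by
                rw [abs_of_nonneg (hx _), abs_of_nonneg (hx _)]
  have h1 : ∑ i ∈ Finset.range (T-1), X i ≤ ∑ i ∈ Finset.range T, X i :=
    Finset.sum_le_sum_of_subset_of_nonneg
      (Finset.range_subset_range.mpr (by omega)) (fun i _ _ => hXnn i)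
  have h2 : ∑ i ∈ Finset.range (T-1), X (i+1) ≤ ∑ i ∈ Finset.range T, X i := by
    have hT' : T = (T-1) + 1 := by omega
    calc ∑ i ∈ Finset.range (T-1), X (i+1)
        ≤ (∑ i ∈ Finset.range (T-1), X (i+1)) + X 0 := le_add_of_nonneg_right (hXnn 0)
      _ = ∑ i ∈ Finset.range ((T-1)+1), X i := (Finset.sum_range_succ' X (T-1)).symm
      _ = ∑ i ∈ Finset.range T, X i := by rw [← hT']
  calc gain T Δ x ≤ ∑ i ∈ Finset.range (T-1), (N * (X i + X (i+1))) := step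
    _ = N * ((∑ i ∈ Finset.range (T-1), X i) + ∑ i ∈ Finset.range (T-1), X (i+1)) := by
        rw [← Finset.sum_add_distrib, Finset.mul_sum]
    _ ≤ N * ((∑ i ∈ Finset.range T, X i) + ∑ i ∈ Finset.range T, X i) := by
        apply mul_le_mul_of_nonneg_left (by linarith) hN
    _ = 2 * N * ∑ t, x t := by rw [hsum]; ring

/-- if `Φ ≥ −K(1+Σx_t)` and `(u,Δ)` superhedges `Φ` with `|Δ_t| ≤ N`, then
`⊕u(x) ≥ −(K+2N)(1+Σx_t)` on `Ω`, and there exist constants `a_t` summing to `0` making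
`ū_t = a_t + u_t + (K+2N)(1/T + ·)` nonnegative, with `⊕ū ≥ Φ + Γ + ((−Δ)·x)_T`. -/
theorem stmt15 (T : ℕ) (hT : 2 ≤ T) (K N : ℝ) (hK : 0 < K) (hN : 0 ≤ N)
    (Φ : (Fin T → ℝ) → ℝ) (u : Fin T → ℝ → ℝ) (Δ : ℕ → (Fin T → ℝ) → ℝ)
    (hΔ : IsStrategy T N Δ)
    (hΦlb : ∀ x : Fin T → ℝ, (∀ t, 0 ≤ x t) → -(K * (1 + ∑ t, x t)) ≤ Φ x)
    (hhedge : ∀ x : Fin T → ℝ, (∀ t, 0 ≤ x t) →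
      Φ x ≤ (∑ t, u t (x t)) + gain T Δ x) :
    (∀ x : Fin T → ℝ, (∀ t, 0 ≤ x t) →
      -((K + 2 * N) * (1 + ∑ t, x t)) ≤ ∑ t, u t (x t)) ∧
    ∃ a : Fin T → ℝ, (∑ t, a t = 0) ∧
      (∀ t : Fin T, ∀ y : ℝ, 0 ≤ y →
        0 ≤ a t + u t y + (K + 2 * N) * (1 / T + y)) ∧
      (∀ x : Fin T → ℝ, (∀ t, 0 ≤ x t) →
        Φ x + (K + 2 * N) * (1 + ∑ t, x t) + gain T (fun i z => -(Δ i z)) x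
          ≤ ∑ t, (a t + u t (x t) + (K + 2 * N) * (1 / T + x t))) := by
  have hΔbd : ∀ i y, |Δ i y| ≤ N := fun i => (hΔ i).2.1
  have hTpos : (0:ℝ) < (T:ℝ) := by exact_mod_cast (by omega : 0 < T)
  -- Part 1
  have part1 : ∀ x : Fin T → ℝ, (∀ t, 0 ≤ x t) →
      -((K + 2 * N) * (1 + ∑ t, x t)) ≤ ∑ t, u t (x t) := by
    intro x hx
    have h1 := hhedge x hx
    have h2 := hΦlb x hx
    have h3 := gain_le T hT N hN Δ hΔbd x hx
    have hS : 0 ≤ ∑ t, x t := Finset.sum_nonneg fun t _ => hx t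
    nlinarith
  refine ⟨part1, ?_⟩
  haveI : NeZero T := ⟨by omega⟩
  -- the shifted payoffs
  set v : Fin T → ℝ → ℝ := fun t y => u t y + (K + 2 * N) * (1 / T + y) with hv
  have hveq : ∀ x : Fin T → ℝ,
      ∑ t, v t (x t) = (∑ t, u t (x t)) + (K + 2 * N) * (1 + ∑ t, x t) := by
    intro x
    simp only [hv]
    rw [Finset.sum_add_distrib, ← Finset.mul_sum, Finset.sum_add_distrib,
      Finset.sum_const, Finset.card_univ, Fintype.card_fin, nsmul_eq_mul]
    have : (T:ℝ) * (1 / T) = 1 := by field_simp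
    rw [this]
  have hvsum : ∀ x : Fin T → ℝ, (∀ t, 0 ≤ x t) → 0 ≤ ∑ t, v t (x t) := by
    intro x hx
    have hp := part1 x hx
    rw [hveq x]
    linarith
  -- lower bound for each v t
  have hlb : ∀ t : Fin T, ∀ y : ℝ, 0 ≤ y → v t 0 - ∑ s, v s 0 ≤ v t y := by
    intro t y hy
    set x : Fin T → ℝ := fun s => if s = t then y else 0 with hxdef
    have hx : ∀ s, 0 ≤ x s := by
      intro s; simp only [hxdef]; split
      · exact hy
      · exact le_rfl
    have hkey := hvsum x hx
    have hsum : ∑ s, v s (x s) = (∑ s, v s 0) + (v t y - v t 0) := by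
      have : ∀ s : Fin T, v s (x s) = v s 0 + (if s = t then v t y - v t 0 else 0) := by
        intro s; simp only [hxdef]
        by_cases h : s = t
        · subst h; simp
        · simp [h]
      rw [Finset.sum_congr rfl fun s _ => this s, Finset.sum_add_distrib,
        Finset.sum_ite_eq' Finset.univ t (fun _ => v t y - v t 0), if_pos (Finset.mem_univ t)]
    rw [hsum] at hkey
    linarith
  set S : Fin T → Set ℝ := fun t => v t '' Set.Ici 0 with hSdef
  have hSne : ∀ t, (S t).Nonempty := fun t => ⟨v t 0, 0, Set.self_mem_Ici, rfl⟩
  have hSbdd : ∀ t, BddBelow (S t) := by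
    intro t
    exact ⟨v t 0 - ∑ s, v s 0, by rintro z ⟨y, hy, rfl⟩; exact hlb t y hy⟩
  set m : Fin T → ℝ := fun t => sInf (S t) with hm
  have hmle : ∀ t : Fin T, ∀ y : ℝ, 0 ≤ y → m t ≤ v t y := by
    intro t y hy
    exact csInf_le (hSbdd t) ⟨y, hy, rfl⟩
  have hmsum : 0 ≤ ∑ t, m t := by
    refine le_of_forall_pos_le_add ?_
    intro ε hε
    have hεT : 0 < ε / T := div_pos hε hTpos
    have hchoice : ∀ t : Fin T, ∃ y : ℝ, 0 ≤ y ∧ v t y < m t + ε / T := by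
      intro t
      obtain ⟨z, hzS, hz⟩ := exists_lt_of_csInf_lt (hSne t)
        (lt_add_of_pos_right (m t) hεT)
      obtain ⟨y, hy, rfl⟩ := hzS
      exact ⟨y, hy, hz⟩
    choose y hy hylt using hchoice
    have h0 := hvsum (fun t => y t) hy
    have hlt : ∑ t, v t (y t) < ∑ t, (m t + ε / T) :=
      Finset.sum_lt_sum_of_nonempty Finset.univ_nonempty fun t _ => hylt t
    have heq : ∑ t : Fin T, (m t + ε / T) = (∑ t, m t) + ε := by
      rw [Finset.sum_add_distrib, Finset.sum_const, Finset.card_univ, Fintype.card_fin,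
        nsmul_eq_mul]
      field_simp
    linarith
  have hsum0 : ∑ t : Fin T, ((∑ s, m s) / T - m t) = 0 := by
    rw [Finset.sum_sub_distrib, Finset.sum_const, Finset.card_univ, Fintype.card_fin,
      nsmul_eq_mul]
    field_simp
    ring
  refine ⟨fun t => (∑ s, m s) / T - m t, hsum0, ?_, ?_⟩
  · intro t y hy
    have h1 : (0:ℝ) ≤ (∑ s, m s) / T := div_nonneg hmsum hTpos.le
    have h2 := hmle t y hy
    simp only [hv] at h2
    linarith
  · intro x hx
    have h1 := hhedge x hx
    have h2 := gain_neg T Δ x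
    have hsum : ∑ t, ((∑ s, m s) / T - m t + u t (x t) + (K + 2 * N) * (1 / T + x t))
        = (∑ t : Fin T, ((∑ s, m s) / T - m t)) + ∑ t, v t (x t) := by
      rw [← Finset.sum_add_distrib]
      refine Finset.sum_congr rfl fun t _ => ?_
      simp only [hv]; ring
    rw [hsum, hsum0, hveq x, h2]
    linarith
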